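/- The only solutions in nonnegative integers of the simultaneous equations y^2 - 3x^2 = 1 and z^2 - 2x^2 = 2 have x = 1 (i.e., (x, y, z) = (1, 2, 2)). -/

import Mathlib

/- Half-companion Pell pairs: (1+√2)^n = (pell2 n).1 + (pell2 n).2 * √2 -/
private def pell2 : ℕ → ℤ × ℤ
  | 0 => (1, 0)
  | n+1 => ((pell2 n).1 + 2*(pell2 n).2, (pell2 n).1 + (pell2 n).2)

private def HH (n : ℕ) : ℤ := (pell2 n).1
private def PP (n : ℕ) : ℤ := (pell2 n).2

private lemma HH_zero : HH 0 = 1 := rfl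
private lemma PP_zero : PP 0 = 0 := rfl
private lemma HH_succ (n : ℕ) : HH (n+1) = HH n + 2 * PP n := rfl
private lemma PP_succ (n : ℕ) : PP (n+1) = HH n + PP n := rfl

private lemma pell2_eq (n : ℕ) : HH n ^ 2 - 2 * PP n ^ 2 = (-1) ^ n := by
  induction n with
  | zero => simp [HH_zero, PP_zero]
  | succ n ih =>
    rw [HH_succ, PP_succ, pow_succ]
    ring_nf
    ring_nf at ih
    linarith

private lemma pell2_eq_even (n : ℕ) (hn : Even n) : HH n ^ 2 - 2 * PP n ^ 2 = 1 := by
  rw [pell2_eq, Even.neg_one_pow hn]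

private lemma HH_add (i j : ℕ) :
    HH (i + j) = HH i * HH j + 2 * PP i * PP j ∧
    PP (i + j) = HH i * PP j + PP i * HH j := by
  induction j with
  | zero => simp [HH_zero, PP_zero]
  | succ j ih =>
    have h1 : i + (j+1) = (i+j) + 1 := by ring
    rw [h1]
    simp only [HH_succ, PP_succ, ih.1, ih.2]
    constructor <;> ring

private lemma HH_pos (n : ℕ) : 0 < HH n ∧ 0 ≤ PP n := by
  induction n with
  | zero => simp [HH_zero, PP_zero]
  | succ n ih => rw [HH_succ, PP_succ]; constructor <;> linarith [ih.1, ih.2]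

private lemma HH_rec (n : ℕ) : HH (n+2) = 2 * HH (n+1) + HH n := by
  rw [show n+2 = (n+1)+1 by ring, HH_succ (n+1), PP_succ, HH_succ]
  ring

/- classification of solutions of x² - 2w² = -1 -/
private lemma nsw_classify : ∀ (n : ℕ) (x w : ℤ), x.natAbs ≤ n → 0 ≤ x → 0 ≤ w →
    x^2 - 2*w^2 = -1 → ∃ m, x = HH (2*m+1) ∧ w = PP (2*m+1) := by
  intro n
  induction n with
  | zero =>
    intro x w hn hx hw heq
    exfalso
    have hx0 : x = 0 := by omega
    rw [hx0] at heq
    have h1 : 2*w^2 = 1 := by linarith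
    rcases eq_or_lt_of_le hw with h | h
    · rw [← h] at h1; norm_num at h1
    · nlinarith
  | succ n ih =>
    intro x w hn hx hw heq
    -- x is odd
    have hodd : x % 2 = 1 := by
      rcases Int.even_or_odd x with ⟨k, hk⟩ | ⟨k, hk⟩
      · exfalso
        have h1 : x^2 = 2*w^2 - 1 := by linarith
        have h2 : x^2 = 4*k^2 := by rw [hk]; ring
        omega
      · omega
    have hx1 : 1 ≤ x := by omega
    rcases eq_or_lt_of_le hx1 with h1 | h1
    · -- x = 1, w = 1
      have hw1 : w = 1 := by nlinarith
      exact ⟨0, by rw [← h1]; rfl, by rw [hw1]; rfl⟩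
    · -- x ≥ 3 (odd, > 1)
      have hx3 : 3 ≤ x := by omega
      have hw3 : 3 ≤ w := by nlinarith
      have hx5 : 5 ≤ x := by
        by_contra h
        push_neg at h
        have : x = 3 ∨ x = 4 := by omega
        rcases this with rfl | rfl <;> nlinarith
      have hw5 : 5 ≤ w := by
        by_contra h
        push_neg at h
        have : w = 3 ∨ w = 4 := by omega
        rcases this with rfl | rfl
        · nlinarith
        · -- w = 4 : x² = 31
          have : x ≤ 5 := by nlinarith
          interval_cases x <;> omega
      set x' : ℤ := 3*x - 4*w with hx'def
      set w' : ℤ := 3*w - 2*x with hw'def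
      have heq' : x'^2 - 2*w'^2 = -1 := by rw [hx'def, hw'def]; linear_combination heq
      have hx'0 : 1 ≤ x' := by nlinarith
      have hw'0 : 0 ≤ w' := by nlinarith
      have hlt : x' < x := by nlinarith
      have hnat : x'.natAbs ≤ n := by
        have := Int.natAbs_lt_natAbs_of_nonneg_of_lt (by linarith : 0 ≤ x') hlt
        omega
      obtain ⟨m, hm1, hm2⟩ := ih x' w' hnat (by linarith) hw'0 heq'
      refine ⟨m+1, ?_, ?_⟩
      · have h2 : 2*(m+1)+1 = (2*m+1) + 2 := by ring
        rw [h2, (HH_add (2*m+1) 2).1]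
        have e1 : HH 2 = 3 := rfl
        have e2 : PP 2 = 2 := rfl
        rw [e1, e2, ← hm1, ← hm2]
        omega
      · have h2 : 2*(m+1)+1 = (2*m+1) + 2 := by ring
        rw [h2, (HH_add (2*m+1) 2).2]
        have e1 : HH 2 = 3 := rfl
        have e2 : PP 2 = 2 := rfl
        rw [e1, e2, ← hm1, ← hm2]
        omega

private lemma modeq_of_dvd_sub {n a b : ℤ} (h : n ∣ a - b) : a ≡ b [ZMOD n] :=
  Int.ModEq.symm (Int.modEq_iff_dvd.mpr h)

/- congruence: HH (i + 4K) ≡ -HH i  [ZMOD HH (2K)] -/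
private lemma HH_shift (i K : ℕ) : HH (i + 4*K) ≡ -HH i [ZMOD HH (2*K)] := by
  have hpe : HH (2*K)^2 - 2*PP (2*K)^2 = 1 := pell2_eq_even _ ⟨K, by ring⟩
  have e1 : HH (i + 4*K) = HH i * HH (4*K) + 2 * PP i * PP (4*K) := (HH_add i (4*K)).1
  have e2 : HH (4*K) = HH (2*K) * HH (2*K) + 2 * PP (2*K) * PP (2*K) := by
    rw [show 4*K = 2*K + 2*K by ring]; exact (HH_add (2*K) (2*K)).1
  have e3 : PP (4*K) = HH (2*K) * PP (2*K) + PP (2*K) * HH (2*K) := by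
    rw [show 4*K = 2*K + 2*K by ring]; exact (HH_add (2*K) (2*K)).2
  refine modeq_of_dvd_sub ⟨2*HH i*HH (2*K) + 4*PP i*PP (2*K), ?_⟩
  rw [e1, e2, e3]; linear_combination (-(HH i)) * hpe

/- squares are congruent with period 4K -/
private lemma HH_sq_period (i q K : ℕ) :
    HH (i + 4*K*q)^2 ≡ HH i ^2 [ZMOD HH (2*K)] := by
  induction q with
  | zero => simp
  | succ q ih =>
    have h1 : i + 4*K*(q+1) = (i + 4*K*q) + 4*K := by ring
    rw [h1]
    have h2 := (HH_shift (i + 4*K*q) K).pow 2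
    rw [neg_sq] at h2
    exact h2.trans ih

/- key congruence: 3·HH(2K+1)² + 1 ≡ -5 mod HH(2K) -/
private lemma key_val (K : ℕ) : 3 * HH (2*K+1)^2 + 1 ≡ -5 [ZMOD HH (2*K)] := by
  have hpe : HH (2*K)^2 - 2*PP (2*K)^2 = 1 := pell2_eq_even _ ⟨K, by ring⟩
  have e1 : HH (2*K+1) = HH (2*K) + 2 * PP (2*K) := HH_succ _
  refine modeq_of_dvd_sub ⟨9*HH (2*K) + 12*PP (2*K), ?_⟩
  rw [e1]; linear_combination (-6) * hpe

private lemma ns25 : ¬ IsSquare (2 : ZMod 5) := by decide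

private lemma jac25 : jacobiSym 2 5 = -1 := by
  have : Fact (Nat.Prime 5) := ⟨by norm_num⟩
  rw [← jacobiSym.legendreSym.to_jacobiSym, legendreSym.eq_neg_one_iff]
  intro hs; apply ns25; exact_mod_cast hs

private lemma jacm5 (n : ℕ) (h4 : n % 4 = 1) (h5 : n % 5 = 2) : jacobiSym (-5) n = -1 := by
  have hodd : Odd n := by
    rcases Nat.even_or_odd n with h | h
    · exfalso; rcases h with ⟨k, rfl⟩; omega
    · exact h
  have h1 : jacobiSym (-5) n = jacobiSym (-1) n * jacobiSym 5 n := by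
    rw [← jacobiSym.mul_left]; norm_num
  have h2 : jacobiSym (-1) n = 1 := by
    rw [jacobiSym.at_neg_one hodd, ZMod.χ₄_nat_one_mod_four h4]
  have h3 : jacobiSym 5 n = jacobiSym 2 5 := by
    have hr := jacobiSym.quadratic_reciprocity_one_mod_four (by norm_num : 5 % 4 = 1) hodd
    push_cast at hr
    rw [hr, jacobiSym.mod_left]
    congr 1
    omega
  rw [h1, h2, h3, jac25]; ring

/- doubling: HH(2n) = 2 HH(n)² - 1 for even n -/
private lemma HH_double (n : ℕ) (hn : Even n) : HH (2*n) = 2 * HH n ^2 - 1 := by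
  have hpe : HH n ^2 - 2*PP n ^2 = 1 := pell2_eq_even n hn
  have e : HH (2*n) = HH n * HH n + 2 * PP n * PP n := by
    rw [show 2*n = n + n by ring]; exact (HH_add n n).1
  rw [e]; linear_combination -hpe

/- properties of HH(2^b), b ≥ 2 -/
private lemma G_props : ∀ b : ℕ, HH (2^(b+2)) % 4 = 1 ∧ HH (2^(b+2)) % 5 = 2 := by
  intro b
  induction b with
  | zero =>
    have : HH 4 = 17 := rfl
    rw [show (2:ℕ)^(0+2) = 4 by norm_num, this]
    norm_num
  | succ b ih =>
    have hdb : HH (2^(b+3)) = 2 * HH (2^(b+2)) ^2 - 1 := by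
      rw [show (2:ℕ)^(b+3) = 2 * 2^(b+2) by ring]
      exact HH_double _ ⟨2^(b+1), by ring⟩
    obtain ⟨h4, h5⟩ := ih
    set H := HH (2^(b+2)) with hH
    obtain ⟨t, ht⟩ : ∃ t, H = 4*t+1 := ⟨H/4, by omega⟩
    obtain ⟨u, hu⟩ : ∃ u, H = 5*u+2 := ⟨H/5, by omega⟩
    constructor
    · rw [show b+1+2 = b+3 by ring, hdb, ht,
        show 2*(4*t+1)^2 - 1 = 4*(8*t^2+4*t) + 1 by ring]
      omega
    · rw [show b+1+2 = b+3 by ring, hdb, hu,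
        show 2*(5*u+2)^2 - 1 = 5*(10*u^2+8*u+1) + 2 by ring]
      omega

private lemma G_jac (b : ℕ) : jacobiSym (-5) (HH (2^(b+2))).toNat = -1 := by
  obtain ⟨h4, h5⟩ := G_props b
  have hpos : 0 < HH (2^(b+2)) := (HH_pos _).1
  set N := (HH (2^(b+2))).toNat with hN
  have hcast : (N : ℤ) = HH (2^(b+2)) := Int.toNat_of_nonneg (le_of_lt hpos)
  apply jacm5 <;> omega

/- the kill lemma: if m % 2K ∈ {K, K-1} with 2K = 2^(a+2), no y² = 3 HH(2m+1)² + 1 -/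
private lemma kill (K m : ℕ) (y : ℤ) (hK : 1 ≤ K)
    (hjac : jacobiSym (-5) (HH (2*K)).toNat = -1)
    (hr : m % (2*K) = K ∨ m % (2*K) = K - 1)
    (hy : y^2 = 3 * HH (2*m+1)^2 + 1) : False := by
  have hpos : 0 < HH (2*K) := (HH_pos _).1
  set r := m % (2*K) with hrdef
  set q := m / (2*K) with hqdef
  have hdm : 2*K*q + r = m := Nat.div_add_mod m (2*K)
  have hm : 2*m+1 = (2*r+1) + 4*K*q := by rw [← hdm]; ring
  have hcong1 : HH (2*m+1)^2 ≡ HH (2*r+1)^2 [ZMOD HH (2*K)] := by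
    rw [hm]; exact HH_sq_period (2*r+1) q K
  -- in both cases, HH(2r+1)² ≡ HH(2K+1)² mod HH(2K)
  have hcong2 : HH (2*r+1)^2 ≡ HH (2*K+1)^2 [ZMOD HH (2*K)] := by
    rcases hr with h | h
    · rw [h]
    · obtain ⟨k, rfl⟩ : ∃ k, K = k + 1 := ⟨K-1, by omega⟩
      rw [h, show k+1-1 = k by omega]
      have hrec : HH (2*(k+1)+1) = 2 * HH (2*(k+1)) + HH (2*k+1) := by
        rw [show 2*(k+1)+1 = (2*k+1)+2 by ring, show 2*(k+1) = (2*k+1)+1 by ring]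
        exact HH_rec (2*k+1)
      have : HH (2*k+1) ≡ HH (2*(k+1)+1) [ZMOD HH (2*(k+1))] := by
        apply modeq_of_dvd_sub
        refine ⟨-2, ?_⟩
        rw [hrec]; ring
      exact this.pow 2
  have hy5 : y^2 ≡ -5 [ZMOD HH (2*K)] := by
    have h3 : 3 * HH (2*m+1)^2 + 1 ≡ 3 * HH (2*K+1)^2 + 1 [ZMOD HH (2*K)] :=
      ((hcong1.trans hcong2).mul_left 3).add_right 1
    rw [hy]
    exact h3.trans (key_val K)
  -- transfer to ZMod
  set N := (HH (2*K)).toNat with hN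
  have hcast : ((N : ℕ) : ℤ) = HH (2*K) := Int.toNat_of_nonneg (le_of_lt hpos)
  have hmod : y^2 ≡ -5 [ZMOD (N : ℤ)] := by rwa [hcast]
  have hsq : ((y^2 : ℤ) : ZMod N) = ((-5 : ℤ) : ZMod N) :=
    (ZMod.intCast_eq_intCast_iff _ _ _).mpr hmod
  have : IsSquare ((-5 : ℤ) : ZMod N) := by
    refine ⟨(y : ZMod N), ?_⟩
    rw [← hsq]; push_cast; ring
  exact ZMod.nonsquare_of_jacobiSym_eq_neg_one hjac this

/- main induction: m % 2^(a+1) ∈ {0, 2^(a+1)-1} -/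
private lemma main_ind (m : ℕ) (y : ℤ) (hy : y^2 = 3 * HH (2*m+1)^2 + 1) :
    ∀ a : ℕ, m % 2^(a+1) = 0 ∨ m % 2^(a+1) = 2^(a+1) - 1 := by
  intro a
  induction a with
  | zero => omega
  | succ a ih =>
    set K := 2^(a+1) with hK
    have hK1 : 1 ≤ K := Nat.one_le_two_pow
    have h2K : 2^(a+1+1) = 2*K := by rw [hK]; ring
    rw [h2K]
    by_contra h
    push_neg at h
    obtain ⟨h1, h2⟩ := h
    have hmm : m % (2*K) % K = m % K := Nat.mod_mod_of_dvd m ⟨2, by ring⟩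
    have hlt : m % (2*K) < 2*K := Nat.mod_lt _ (by omega)
    obtain ⟨j, hj⟩ : ∃ j, m % (2*K) = K * j + m % K :=
      ⟨(m % (2*K)) / K, by conv_lhs => rw [← Nat.div_add_mod (m % (2*K)) K, hmm]⟩
    have hmk : m % K < K := Nat.mod_lt _ (by omega)
    have hjlt : j < 2 := by
      apply Nat.lt_of_mul_lt_mul_left (a := K)
      have hle : K * j ≤ m % (2*K) := le_trans (Nat.le_add_right _ _) (le_of_eq hj.symm)
      calc K * j ≤ m % (2*K) := hle
        _ < 2*K := hlt
        _ = K*2 := by ring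
    have hr : m % (2*K) = K ∨ m % (2*K) = K - 1 := by
      interval_cases j <;> rcases ih with h0 | hk1 <;> omega
    have hjac : jacobiSym (-5) (HH (2*K)).toNat = -1 := by
      have : 2*K = 2^(a+2) := by rw [hK]; ring
      rw [this]
      exact G_jac a
    exact kill K m y hK1 hjac hr hy

theorem stmt_16 : ∀ x y z : ℤ, 0 ≤ x → 0 ≤ y → 0 ≤ z →
    y^2 - 3 * x^2 = 1 → z^2 - 2 * x^2 = 2 → x = 1 := by
  intro x y z hx hy hz h1 h2
  -- z is even
  obtain ⟨w, hw⟩ : ∃ w, z = 2*w := by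
    rcases Int.even_or_odd z with ⟨k, hk⟩ | ⟨k, hk⟩
    · exact ⟨k, by omega⟩
    · exfalso
      have : z^2 = 2*x^2 + 2 := by linarith
      have h2' : z^2 = 4*k^2 + 4*k + 1 := by rw [hk]; ring
      omega
  have hw0 : 0 ≤ w := by omega
  have heq : x^2 - 2*w^2 = -1 := by
    have : (2*w)^2 - 2*x^2 = 2 := by rw [← hw]; exact h2
    linarith
  obtain ⟨m, hxm, -⟩ := nsw_classify x.natAbs x w le_rfl hx hw0 heq
  have hy2 : y^2 = 3 * HH (2*m+1)^2 + 1 := by rw [← hxm]; linarith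
  have hfin := main_ind m y hy2 (m+1)
  simp only [show m+1+1 = m+2 from rfl] at hfin
  have hlt : m + 2 < 2^(m+2) := Nat.lt_two_pow_self (n := m+2)
  have hmod : m % 2^(m+2) = m := Nat.mod_eq_of_lt (by omega)
  rw [hmod] at hfin
  have hm0 : m = 0 := by
    rcases hfin with h | h <;> omega
  rw [hxm, hm0]
  rfl
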